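/- Let Λ be a 2-graph with a single vertex that is finite with at least two edges of each colour, and let a, b be positive integers such that λ((a,0), d(λ) − (0,b)) = λ((0,b), d(λ) − (a,0)) for all λ ∈ Λ with d(λ) ≥ (a,b). Then for each μ ∈ Λ^{(a,0)} there is a unique element γ(μ) ∈ Λ^{(0,b)} such that (αμ)((a,0),(a,b)) = γ(μ) = (μβ)((0,0),(0,b)) for all α, β ∈ Λ^{(0,b)}. -/

import Mathlib

/-- Let `Λ` be a 2-graph with a single vertex (a monoid with an additive
degree map `d : Λ → ℕ²` having the unique factorisation property), finite with at least two
edges of each colour.  For `p ≤ q ≤ d lam`, `seg lam p q` denotes the segment `lam(p,q)`.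
Let `a, b` be positive integers such that `lam((a,0), d lam - (0,b)) = lam((0,b), d lam - (a,0))`
for all `lam` with `d lam ≥ (a,b)`.  Then for each `μ ∈ Λ^{(a,0)}` there is a unique
`g ∈ Λ^{(0,b)}` such that `(α * μ)((a,0),(a,b)) = g = (μ * β)((0,0),(0,b))` for all
`α, β ∈ Λ^{(0,b)}`. -/
theorem stmt15 {Λ : Type*} [Monoid Λ] (d : Λ → ℕ × ℕ)
    (hd : ∀ x y : Λ, d (x * y) = d x + d y)
    (hfac : ∀ (lam : Λ) (p q : ℕ × ℕ), d lam = p + q →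
      ∃! mn : Λ × Λ, d mn.1 = p ∧ d mn.2 = q ∧ lam = mn.1 * mn.2)
    (seg : Λ → ℕ × ℕ → ℕ × ℕ → Λ)
    (hseg : ∀ (lam : Λ) (p q : ℕ × ℕ), p ≤ q → q ≤ d lam →
      d (seg lam p q) = q - p ∧ ∃ α γ : Λ, d α = p ∧ lam = α * seg lam p q * γ)
    (hfinB : {e : Λ | d e = (1, 0)}.Finite) (hfinR : {e : Λ | d e = (0, 1)}.Finite)
    (h2B : 2 ≤ Nat.card {e : Λ | d e = (1, 0)}) (h2R : 2 ≤ Nat.card {e : Λ | d e = (0, 1)})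
    (a b : ℕ) (ha : 0 < a) (hb : 0 < b)
    (heq : ∀ lam : Λ, (a, b) ≤ d lam →
      seg lam (a, 0) (d lam - (0, b)) = seg lam (0, b) (d lam - (a, 0))) :
    ∀ μ : Λ, d μ = (a, 0) →
      ∃! g : Λ, d g = (0, b) ∧
        (∀ α : Λ, d α = (0, b) → seg (α * μ) (a, 0) (a, b) = g) ∧
        (∀ β : Λ, d β = (0, b) → seg (μ * β) (0, 0) (0, b) = g) := by

  -- basic facts
  have hd1 : d 1 = (0 : ℕ × ℕ) := by
    have h := hd 1 1
    rw [one_mul] at h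
    exact (left_eq_add.mp h)
  have deg0 : ∀ γ : Λ, d γ = 0 → γ = 1 := by
    intro γ hγ
    obtain ⟨mn, _, hu⟩ := hfac γ 0 0 (by simp [hγ])
    have h1 := hu (1, γ) ⟨hd1, hγ, (one_mul γ).symm⟩
    have h2 := hu (γ, 1) ⟨hγ, hd1, (mul_one γ).symm⟩
    exact (congrArg Prod.fst (h1.trans h2.symm)).symm
  have fac_uniq : ∀ (lam A s C A' s' C' : Λ), lam = A * s * C → lam = A' * s' * C' →
      d A = d A' → d s = d s' → s = s' := by
    intro lam A s C A' s' C' h h' hA hs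
    have hdlam : d lam = d A + (d s + d C) := by
      rw [h, hd, hd, add_assoc]
    have hdlam' : d lam = d A' + (d s' + d C') := by
      rw [h', hd, hd, add_assoc]
    have hdC : d C = d C' := by
      have e := hdlam.symm.trans hdlam'
      rw [hA, hs] at e
      exact add_left_cancel (add_left_cancel e)
    obtain ⟨mn, _, hu⟩ := hfac lam (d A) (d s + d C) hdlam
    have e1 := hu (A, s * C) ⟨rfl, (hd s C).symm ▸ rfl, by rw [h, mul_assoc]⟩
    have e2 := hu (A', s' * C') ⟨hA.symm, by rw [hd, hs, hdC], by rw [h', mul_assoc]⟩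
    have esc : s * C = s' * C' := congrArg Prod.snd (e1.trans e2.symm)
    obtain ⟨mn2, _, hu2⟩ := hfac (s * C) (d s) (d C) (hd s C)
    have f1 := hu2 (s, C) ⟨rfl, rfl, rfl⟩
    have f2 := hu2 (s', C') ⟨hs.symm, hdC.symm, esc⟩
    exact congrArg Prod.fst (f1.trans f2.symm)
  have seg_eq : ∀ (lam : Λ) (p q : ℕ × ℕ), p ≤ q → q ≤ d lam →
      ∀ A s C : Λ, d A = p → d s = q - p → lam = A * s * C → seg lam p q = s := by
    intro lam p q hpq hq A s C hA hs h
    obtain ⟨hds, α, γ, hα, hlam⟩ := hseg lam p q hpq hq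
    exact fac_uniq lam α (seg lam p q) γ A s C hlam h (hα.trans hA.symm) (hds.trans hs.symm)
  intro μ hμ
  -- an element of degree (0, b)
  have hne : Nonempty {e : Λ | d e = (0, 1)} := by
    have : Nat.card {e : Λ | d e = (0, 1)} ≠ 0 := by omega
    exact (Nat.card_ne_zero.mp this).1
  obtain ⟨e, he⟩ := hne
  have hpow : ∀ n : ℕ, d (e ^ n) = (0, n) := by
    intro n
    induction n with
    | zero => rw [pow_zero, hd1]; rfl
    | succ n ih =>
      rw [pow_succ, hd, ih, he, Prod.mk_add_mk]
  set β₀ : Λ := e ^ b with hβ₀def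
  have hβ₀ : d β₀ = (0, b) := hpow b
  -- the key claim
  have key : ∀ α β : Λ, d α = (0, b) → d β = (0, b) →
      seg (α * μ) (a, 0) (a, b) = seg (μ * β) (0, 0) (0, b) := by
    intro α β hα hβ
    have hdαμ : d (α * μ) = (a, b) := by rw [hd, hα, hμ, Prod.mk_add_mk]; simp
    have hdμβ : d (μ * β) = (a, b) := by rw [hd, hμ, hβ, Prod.mk_add_mk]; simp
    have hdlam : d (α * μ * β) = (a, b + b) := by
      rw [hd, hdαμ, hβ, Prod.mk_add_mk]; simp
    -- decompose α*μ
    obtain ⟨hds1, A, C, hA, hh⟩ := hseg (α * μ) (a, 0) (a, b)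
      (by simp [Prod.mk_le_mk]) (le_of_eq hdαμ.symm)
    have hds1' : d (seg (α * μ) (a, 0) (a, b)) = (0, b) := by
      rw [hds1, Prod.mk_sub_mk]; simp
    have hdC : d C = 0 := by
      have h' := congrArg d hh
      rw [hd, hd, hd, hα, hμ, hA, hds1'] at h'
      rcases hc : d C with ⟨c1, c2⟩
      rw [hc] at h'
      simp [Prod.mk_add_mk, Prod.ext_iff] at h'
      simp [Prod.ext_iff]
      omega
    rw [deg0 C hdC, mul_one] at hh
    -- decompose μ*β
    obtain ⟨hds2, A', C', hA', hh'⟩ := hseg (μ * β) (0, 0) (0, b)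
      (by simp [Prod.mk_le_mk]) (by rw [hdμβ]; simp [Prod.mk_le_mk])
    have hds2' : d (seg (μ * β) (0, 0) (0, b)) = (0, b) := by
      rw [hds2, Prod.mk_sub_mk]; simp
    rw [deg0 A' (by rw [hA']; rfl), one_mul] at hh'
    -- apply heq
    have hle : ((a : ℕ), b) ≤ d (α * μ * β) := by rw [hdlam]; simp [Prod.mk_le_mk]
    have he1 : d (α * μ * β) - ((0 : ℕ), b) = (a, b) := by
      rw [hdlam, Prod.mk_sub_mk]; simp
    have he2 : d (α * μ * β) - ((a : ℕ), 0) = (0, b + b) := by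
      rw [hdlam, Prod.mk_sub_mk]; simp
    have hheq := heq (α * μ * β) hle
    rw [he1, he2] at hheq
    have s1eq : seg (α * μ * β) (a, 0) (a, b) = seg (α * μ) (a, 0) (a, b) := by
      refine seg_eq (α * μ * β) (a, 0) (a, b) (by simp [Prod.mk_le_mk])
        (by rw [hdlam]; simp [Prod.mk_le_mk]) A _ β hA ?_ ?_
      · rw [hds1', Prod.mk_sub_mk]; simp
      · conv_lhs => rw [hh]
    have s2eq : seg (α * μ * β) (0, b) (0, b + b) = seg (μ * β) (0, 0) (0, b) := by
      refine seg_eq (α * μ * β) (0, b) (0, b + b) (by simp [Prod.mk_le_mk])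
        (by rw [hdlam]; simp [Prod.mk_le_mk]) α _ C' hα ?_ ?_
      · rw [hds2', Prod.mk_sub_mk]; simp
      · conv_lhs => rw [mul_assoc, hh', ← mul_assoc]
    rw [← s1eq, ← s2eq, hheq]
  -- main construction
  refine ⟨seg (μ * β₀) (0, 0) (0, b), ⟨?_, ?_, ?_⟩, ?_⟩
  · have hdμβ : d (μ * β₀) = (a, b) := by rw [hd, hμ, hβ₀, Prod.mk_add_mk]; simp
    have := (hseg (μ * β₀) (0, 0) (0, b) (by simp [Prod.mk_le_mk])
      (by rw [hdμβ]; simp [Prod.mk_le_mk])).1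
    rw [this, Prod.mk_sub_mk]; simp
  · intro α hα
    exact key α β₀ hα hβ₀
  · intro β hβ
    rw [← key β₀ β hβ₀ hβ, key β₀ β₀ hβ₀ hβ₀]
  · rintro g' ⟨_, _, hg2⟩
    exact (hg2 β₀ hβ₀).symm
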